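/- Let α(t) = 0, β(t) = t, γ(t) = -t, θ(t) = arctan t + π/2, so cos θ(t) = -t/√(1+t²) and sin θ(t) = 1/√(1+t²). Then the image of X(s,t) = (s sin θ(t), -s cos θ(t) + t, s t sin θ(t) - t) equals the set {(x,y,z) ∈ R³ : z(x+1) = y(x-1)}. -/

import Mathlib

open Real Set

/-- Example 2.1: with θ(t) = arctan t + π/2, α = 0, β(t) = t, γ(t) = -t, the
image of X(s,t) is exactly the surface z(x+1) = y(x-1). -/
theorem example21_image :
    Set.range (fun p : ℝ × ℝ =>
      (p.1 * Real.sin (Real.arctan p.2 + Real.pi / 2),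
        -p.1 * Real.cos (Real.arctan p.2 + Real.pi / 2) + p.2,
        p.1 * p.2 * Real.sin (Real.arctan p.2 + Real.pi / 2) - p.2))
    = {q : ℝ × ℝ × ℝ | q.2.2 * (q.1 + 1) = q.2.1 * (q.1 - 1)} := by
  have hs : ∀ t : ℝ, Real.sqrt (1 + t ^ 2) ≠ 0 := fun t => by positivity
  ext ⟨x, y, z⟩
  simp only [Set.mem_range, Set.mem_setOf_eq, Prod.mk.injEq, Prod.exists]
  constructor
  · rintro ⟨s, t, hx, hy, hz⟩
    simp only [Real.sin_add_pi_div_two, Real.cos_add_pi_div_two, Real.cos_arctan,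
      Real.sin_arctan] at hx hy hz
    subst hx; subst hy; subst hz
    field_simp
  · intro h
    by_cases hx1 : x = -1
    · subst hx1
      obtain rfl : y = 0 := by nlinarith [h]
      refine ⟨-Real.sqrt (1 + (-z / 2) ^ 2), -z / 2, ?_, ?_, ?_⟩ <;>
          simp only [Real.sin_add_pi_div_two, Real.cos_add_pi_div_two, Real.cos_arctan,
            Real.sin_arctan] <;>
        · field_simp
          all_goals ring
    · have hx1' : x + 1 ≠ 0 := fun hc => hx1 (by linarith)
      set t := y / (x + 1) with ht
      have hyt : y = t * (x + 1) := by rw [ht]; field_simp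
      have hzt : z = t * (x - 1) := by
        have : z * (x + 1) = t * (x - 1) * (x + 1) := by rw [h, hyt]; ring
        exact mul_right_cancel₀ hx1' this
      refine ⟨x * Real.sqrt (1 + t ^ 2), t, ?_, ?_, ?_⟩ <;>
          simp only [Real.sin_add_pi_div_two, Real.cos_add_pi_div_two, Real.cos_arctan,
            Real.sin_arctan]
      · field_simp
      · rw [hyt]; field_simp
      · rw [hzt]; field_simp
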